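/- Let n ≥ 3 be odd, let K be a division ring with at least 3 elements, let P be an n-dimensional affine space over K, and set m = (n+1)/2 and r = 2^{m+1} − 4. If a₁, a₂ are lines of P with a₁ and a₂ independent (i.e. the affine span of a₁ ∪ a₂ has dimension 3, so a₁ and a₂ are skew), then there exist lines a₃, …, a_m such that a₁, …, a_m are independent and every line g of P satisfies M_r(a₁,…,a_m; g). -/

import Mathlib

/-- `a` is an affine line: a nonempty affine subspace whose direction has finrank 1. -/
def ALine (K : Type*) {V P : Type*} [DivisionRing K] [AddCommGroup V] [Module K V]
    [AddTorsor V P] (a : AffineSubspace K P) : Prop :=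
  (a : Set P).Nonempty ∧ Module.finrank K a.direction = 1

/-- `a` is an affine plane: a nonempty affine subspace whose direction has finrank 2. -/
def APlane (K : Type*) {V P : Type*} [DivisionRing K] [AddCommGroup V] [Module K V]
    [AddTorsor V P] (a : AffineSubspace K P) : Prop :=
  (a : Set P).Nonempty ∧ Module.finrank K a.direction = 2

/-- Two lines intersect: they are different and have a common point. -/
def AMeets {K V P : Type*} [DivisionRing K] [AddCommGroup V] [Module K V]
    [AddTorsor V P] (a b : AffineSubspace K P) : Prop :=
  a ≠ b ∧ ((a : Set P) ∩ (b : Set P)).Nonempty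

/-- `x` meets the lines `y` and `z` in two distinct points. -/
def AMeetsTwo {K V P : Type*} [DivisionRing K] [AddCommGroup V] [Module K V]
    [AddTorsor V P] (x y z : AffineSubspace K P) : Prop :=
  AMeets x y ∧ AMeets x z ∧ x ⊓ y ≠ x ⊓ z

/-- `M(ℓ₁,…,ℓ_k; x)`: `x` is one of the lines in the list `ls`, or `x` meets two of
them in two distinct points. -/
def MPred {K V P : Type*} [DivisionRing K] [AddCommGroup V] [Module K V]
    [AddTorsor V P] (ls : List (AffineSubspace K P)) (x : AffineSubspace K P) : Prop :=
  x ∈ ls ∨ ∃ y ∈ ls, ∃ z ∈ ls, AMeetsTwo x y z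

/-- `M_q(a₁,…,a_m; x)`: there are lines `b₁,…,b_q` such that
`M(a₁,…,a_m,b₁,…,b_{i-1}; bᵢ)` for all `i`, and `M(a₁,…,a_m,b₁,…,b_q; x)`. -/
def MqPred {K V P : Type*} [DivisionRing K] [AddCommGroup V] [Module K V]
    [AddTorsor V P] (q : ℕ) (as : List (AffineSubspace K P))
    (x : AffineSubspace K P) : Prop :=
  ∃ b : Fin q → AffineSubspace K P, (∀ i, ALine K (b i)) ∧
    (∀ i : Fin q, MPred (as ++ (List.ofFn b).take i) (b i)) ∧
    MPred (as ++ List.ofFn b) x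


section Util
variable {K V P : Type*} [DivisionRing K] [AddCommGroup V] [Module K V] [AddTorsor V P]

lemma mem_line_iff {p₁ p₂ q : P} :
    q ∈ line[K, p₁, p₂] ↔ ∃ r : K, r • (p₂ -ᵥ p₁) +ᵥ p₁ = q := by
  constructor
  · intro h
    have h2 : (q -ᵥ p₁) +ᵥ p₁ ∈ line[K, p₁, p₂] := by rwa [vsub_vadd]
    obtain ⟨r, hr⟩ := vadd_left_mem_affineSpan_pair.1 h2
    exact ⟨r, by rw [hr, vsub_vadd]⟩
  · rintro ⟨r, rfl⟩; exact smul_vsub_vadd_mem_affineSpan_pair r p₁ p₂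

lemma line_aline {p q : P} (h : p ≠ q) : ALine K (line[K, p, q]) := by
  refine ⟨⟨p, left_mem_affineSpan_pair K p q⟩, ?_⟩
  rw [direction_affineSpan, vectorSpan_pair]
  exact finrank_span_singleton (vsub_ne_zero.2 h)

lemma aline_eq_line {x : AffineSubspace K P} (hx : ALine K x) {p q : P}
    (hp : p ∈ x) (hq : q ∈ x) (hpq : p ≠ q) : x = line[K, p, q] := by
  have hle : line[K, p, q] ≤ x := affineSpan_pair_le_of_mem_of_mem hp hq
  have hdle : (line[K, p, q]).direction ≤ x.direction := AffineSubspace.direction_le hle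
  haveI : FiniteDimensional K x.direction :=
    Module.finite_of_finrank_eq_succ (n := 0) hx.2
  have hl : Module.finrank K (line[K, p, q]).direction = 1 := (line_aline hpq).2
  have hdeq : (line[K, p, q]).direction = x.direction :=
    Submodule.eq_of_le_of_finrank_le hdle (by rw [hl, hx.2])
  exact (AffineSubspace.ext_of_direction_eq hdeq ⟨p, left_mem_affineSpan_pair K p q, hp⟩).symm

lemma line_eq_line_of_mem {x y : AffineSubspace K P} (hx : ALine K x) (hy : ALine K y)
    {p q : P} (hpx : p ∈ x) (hqx : q ∈ x) (hpy : p ∈ y) (hqy : q ∈ y) (hpq : p ≠ q) :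
    x = y := by
  rw [aline_eq_line hx hpx hqx hpq, aline_eq_line hy hpy hqy hpq]

lemma ameets_two_of {x y z : AffineSubspace K P} {p q : P} (hxy : x ≠ y) (hxz : x ≠ z)
    (hpx : p ∈ x) (hpy : p ∈ y) (hqx : q ∈ x) (hqz : q ∈ z) (hpz : p ∉ z) :
    AMeetsTwo x y z := by
  refine ⟨⟨hxy, ⟨p, hpx, hpy⟩⟩, ⟨hxz, ⟨q, hqx, hqz⟩⟩, fun h => hpz ?_⟩
  have : p ∈ x ⊓ y := (AffineSubspace.mem_inf_iff p x y).2 ⟨hpx, hpy⟩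
  rw [h] at this
  exact ((AffineSubspace.mem_inf_iff p x z).1 this).2

lemma MPred_mono {l l' : List (AffineSubspace K P)} (h : l ⊆ l') {x : AffineSubspace K P}
    (hm : MPred l x) : MPred l' x := by
  rcases hm with h1 | ⟨y, hy, z, hz, h2⟩
  · exact Or.inl (h h1)
  · exact Or.inr ⟨y, h hy, z, h hz, h2⟩

/-- A chain of lines, each satisfying `M` with respect to the context plus earlier ones. -/
def AChain (as : List (AffineSubspace K P)) : List (AffineSubspace K P) → Prop
  | [] => True
  | x :: c => (ALine K x ∧ MPred as x) ∧ AChain (as ++ [x]) c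

lemma AChain.nil {as : List (AffineSubspace K P)} : AChain as [] := trivial

lemma AChain.mono : ∀ {c as as' : List (AffineSubspace K P)}, as ⊆ as' →
    AChain as c → AChain as' c
  | [], _, _, _, _ => trivial
  | x :: c, as, as', h, hc =>
    ⟨⟨hc.1.1, MPred_mono h hc.1.2⟩,
      AChain.mono (List.append_subset.2 ⟨List.Subset.trans h (List.subset_append_left _ _),
        List.subset_append_right _ _⟩) hc.2⟩

lemma AChain.append : ∀ {c₁ c₂ as : List (AffineSubspace K P)},
    AChain as c₁ → AChain (as ++ c₁) c₂ → AChain as (c₁ ++ c₂)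
  | [], c₂, as, _, h₂ => by simpa using h₂
  | x :: c₁, c₂, as, h₁, h₂ => by
    refine ⟨h₁.1, AChain.append h₁.2 ?_⟩
    have : as ++ x :: c₁ = (as ++ [x]) ++ c₁ := by simp
    rwa [this] at h₂

lemma AChain.aline : ∀ {c as : List (AffineSubspace K P)}, AChain as c →
    ∀ x ∈ c, ALine K x
  | [], _, _, _, hx => by simp at hx
  | y :: c, as, hc, x, hx => by
    rcases List.mem_cons.1 hx with rfl | hx
    · exact hc.1.1
    · exact AChain.aline hc.2 x hx

lemma AChain.mpred : ∀ {c as : List (AffineSubspace K P)}, AChain as c →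
    ∀ i (h : i < c.length), MPred (as ++ c.take i) (c.get ⟨i, h⟩)
  | [], _, _, i, h => by simp at h
  | y :: c, as, hc, 0, h => by simpa using hc.1.2
  | y :: c, as, hc, (i+1), h => by
    have := AChain.mpred hc.2 i (Nat.lt_of_succ_lt_succ h)
    simpa [List.append_assoc] using this

lemma AChain.replicate {as : List (AffineSubspace K P)} {d : AffineSubspace K P}
    (hd : ALine K d) (hmem : d ∈ as) : ∀ j, AChain as (List.replicate j d)
  | 0 => trivial
  | (j+1) =>
    ⟨⟨hd, Or.inl hmem⟩, (AChain.replicate hd (List.mem_append_left _ hmem) j :)⟩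

end Util

section Util2
variable {K V P : Type*} [DivisionRing K] [AddCommGroup V] [Module K V] [AddTorsor V P]

lemma mqPred_of_chain {AS : List (AffineSubspace K P)} {d : AffineSubspace K P}
    (hd : ALine K d) (hdAS : d ∈ AS) {c : List (AffineSubspace K P)} (hc : AChain AS c)
    {r : ℕ} (hlen : c.length ≤ r) {g : AffineSubspace K P} (hg : MPred (AS ++ c) g) :
    MqPred r AS g := by
  classical
  set cpad := c ++ List.replicate (r - c.length) d with hcpad
  have hsub : c ⊆ cpad := List.subset_append_left _ _
  have hchain : AChain AS cpad :=
    hc.append (AChain.replicate hd (List.mem_append_left _ hdAS) _)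
  have hlen2 : cpad.length = r := by simp [hcpad]; omega
  obtain ⟨cp, hchain2, hsub2, rfl⟩ :
      ∃ cp : List (AffineSubspace K P), AChain AS cp ∧ c ⊆ cp ∧ cp.length = r :=
    ⟨cpad, hchain, hsub, hlen2⟩
  refine ⟨cp.get, ?_, ?_, ?_⟩
  · exact fun i => hchain2.aline _ (by exact cp.get_mem i)
  · intro i
    rw [List.ofFn_get]
    exact hchain2.mpred i.1 i.isLt
  · rw [List.ofFn_get]
    exact MPred_mono (List.append_subset.2 ⟨List.subset_append_left _ _,
      List.Subset.trans hsub2 (List.subset_append_right _ _)⟩) hg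

end Util2

section Coords
variable {K V : Type*} [DivisionRing K] [AddCommGroup V] [Module K V] {n : ℕ}

/-- The `j`-th basis vector, `1 ≤ j ≤ n`. -/
noncomputable def EE (B : Module.Basis (Fin n) K V) (j : ℕ) : V :=
  if h : 1 ≤ j ∧ j ≤ n then B ⟨j - 1, by omega⟩ else 0

/-- The `j`-th coordinate functional. -/
noncomputable def phi (B : Module.Basis (Fin n) K V) (j : ℕ) : V →ₗ[K] K :=
  if h : 1 ≤ j ∧ j ≤ n then B.coord ⟨j - 1, by omega⟩ else 0

variable (B : Module.Basis (Fin n) K V)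

lemma EE_apply {j : ℕ} (h1 : 1 ≤ j) (h2 : j ≤ n) : EE B j = B ⟨j - 1, by omega⟩ := by
  simp [EE, h1, h2]

lemma phi_EE_same {j : ℕ} (h1 : 1 ≤ j) (h2 : j ≤ n) : phi B j (EE B j) = 1 := by
  simp [EE, phi, h1, h2, Module.Basis.coord_apply]

lemma phi_EE_ne {j j' : ℕ} (h : j ≠ j') : phi B j (EE B j') = 0 := by
  unfold EE phi
  split_ifs with h1 h2 h2
  · rw [Module.Basis.coord_apply, Module.Basis.repr_self, Finsupp.single_apply, if_neg]
    intro he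
    apply h
    have h3 := congrArg Fin.val he
    simp at h3
    omega
  · simp
  · simp
  · simp

/-- Span of the first `l` basis vectors. -/
noncomputable def SS (B : Module.Basis (Fin n) K V) (l : ℕ) : Submodule K V :=
  Submodule.span K (EE B '' Set.Icc 1 l)

lemma EE_mem_SS {j l : ℕ} (h1 : 1 ≤ j) (h2 : j ≤ l) : EE B j ∈ SS B l :=
  Submodule.subset_span ⟨j, ⟨h1, h2⟩, rfl⟩

lemma SS_mono {l l' : ℕ} (h : l ≤ l') : SS B l ≤ SS B l' :=
  Submodule.span_mono (Set.image_mono (Set.Icc_subset_Icc_right h))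

lemma phi_zero_of_mem_SS {j l : ℕ} (hj : j ∉ Set.Icc 1 l) {v : V} (hv : v ∈ SS B l) :
    phi B j v = 0 := by
  have hle : SS B l ≤ LinearMap.ker (phi B j) := by
    rw [SS, Submodule.span_le]
    rintro _ ⟨j', hj', rfl⟩
    have : j ≠ j' := fun he => hj (he ▸ hj')
    simpa [LinearMap.mem_ker] using phi_EE_ne B this
  simpa [LinearMap.mem_ker] using hle hv

lemma SS_step {l : ℕ} (hl : l + 1 ≤ n) {v : V} (hv : v ∈ SS B (l + 1)) :
    v - phi B (l + 1) v • EE B (l + 1) ∈ SS B l := by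
  have hicc : Set.Icc 1 (l + 1) = insert (l + 1) (Set.Icc 1 l) := by
    ext j; simp [Set.mem_Icc]; omega
  rw [SS, hicc, Set.image_insert_eq, Submodule.span_insert] at hv
  obtain ⟨y, hy, z, hz, rfl⟩ := Submodule.mem_sup.1 hv
  obtain ⟨a, rfl⟩ := Submodule.mem_span_singleton.1 hy
  have hz' : phi B (l + 1) z = 0 := phi_zero_of_mem_SS B (by simp) hz
  have hself : phi B (l + 1) (EE B (l + 1)) = 1 := phi_EE_same B (by omega) hl
  have hval : phi B (l + 1) (a • EE B (l + 1) + z) = a := by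
    simp [hz', hself]
  rw [hval]
  simpa [SS] using hz

lemma SS_top (hn : 0 < n) : SS B n = ⊤ := by
  refine le_antisymm le_top ?_
  rw [← B.span_eq]
  refine Submodule.span_le.2 ?_
  rintro _ ⟨i, rfl⟩
  refine Submodule.subset_span ⟨i.1 + 1, ⟨by omega, by omega⟩, ?_⟩
  rw [EE_apply B (by omega) (by omega)]
  exact congrArg B (Fin.ext (by simp))

end Coords

section UUdef
variable {K V P : Type*} [DivisionRing K] [AddCommGroup V] [Module K V] [AddTorsor V P]
  {n : ℕ}

/-- The affine subspace through `o` spanned by the first `l` basis directions. -/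
noncomputable def UU (B : Module.Basis (Fin n) K V) (o : P) (l : ℕ) : AffineSubspace K P :=
  AffineSubspace.mk' o (SS B l)

lemma mem_UU {B : Module.Basis (Fin n) K V} {o : P} {l : ℕ} {p : P} :
    p ∈ UU B o l ↔ p -ᵥ o ∈ SS B l :=
  AffineSubspace.mem_mk'

lemma UU_mono {B : Module.Basis (Fin n) K V} {o : P} {l l' : ℕ} (h : l ≤ l') :
    UU B o l ≤ UU B o l' := fun _p hp => mem_UU.2 (SS_mono B h (mem_UU.1 hp))

end UUdef

section Core
variable {K V P : Type*} [DivisionRing K] [AddCommGroup V] [Module K V] [AddTorsor V P]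
  {n m : ℕ}

/-- Reachability of a line through `p` inside `S` with a chain of length `≤ cb`. -/
def ReachL (AS : List (AffineSubspace K P)) (cb : ℕ) (S : AffineSubspace K P) (p : P) :
    Prop :=
  ∃ c x, AChain AS c ∧ c.length ≤ cb ∧ x ∈ AS ++ c ∧ ALine K x ∧ p ∈ x ∧ x ≤ S

lemma line_param {B : Module.Basis (Fin n) K V} {o u bb q : P} {j : ℕ}
    (hu : phi B j (u -ᵥ o) = 0) (hb : phi B j (bb -ᵥ o) = 1)
    (hq : q ∈ line[K, u, bb]) : q = phi B j (q -ᵥ o) • (bb -ᵥ u) +ᵥ u := by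
  obtain ⟨t, rfl⟩ := mem_line_iff.1 hq
  have h1 : (t • (bb -ᵥ u) +ᵥ u) -ᵥ o = t • (bb -ᵥ u) + (u -ᵥ o) := vadd_vsub_assoc _ _ _
  have h2 : bb -ᵥ u = (bb -ᵥ o) - (u -ᵥ o) := (vsub_sub_vsub_cancel_right _ _ _).symm
  have h3 : phi B j ((t • (bb -ᵥ u) +ᵥ u) -ᵥ o) = t := by
    rw [h1, map_add, map_smul, h2, map_sub, hu, hb]
    simp
  rw [h3]

lemma a_mem_AS {a : ℕ → AffineSubspace K P} {AS : List (AffineSubspace K P)}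
    (hAS : AS = (List.range m).map fun i => a (i + 1)) {j : ℕ} (h1 : 1 ≤ j) (h2 : j ≤ m) :
    a j ∈ AS := by
  subst hAS
  refine List.mem_map.2 ⟨j - 1, List.mem_range.2 (by omega), by congr 1; omega⟩

lemma mem_aj_iff {B : Module.Basis (Fin n) K V} {o : P} {a : ℕ → AffineSubspace K P}
    (haj : ∀ j, 2 ≤ j → j ≤ m →
      a j = line[K, EE B (2*j-2) +ᵥ o, (EE B (2*j-2) + EE B (2*j-1)) +ᵥ o])
    {j : ℕ} (h2 : 2 ≤ j) (hj : j ≤ m) {q : P} :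
    q ∈ a j ↔ ∃ t : K, q = (EE B (2*j-2) + t • EE B (2*j-1)) +ᵥ o := by
  rw [haj j h2 hj, mem_line_iff]
  have hd : ((EE B (2*j-2) + EE B (2*j-1)) +ᵥ o) -ᵥ (EE B (2*j-2) +ᵥ o) = EE B (2*j-1) := by
    rw [vadd_vsub_vadd_cancel_right]; abel
  constructor
  · rintro ⟨t, rfl⟩
    exact ⟨t, by rw [hd, vadd_vadd]; congr 1; abel⟩
  · rintro ⟨t, rfl⟩
    exact ⟨t, by rw [hd, vadd_vadd]; congr 1; abel⟩

/-- Decomposition of a point of `UU B o (2k+1)`. -/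
lemma decompose {B : Module.Basis (Fin n) K V} {o : P} {k : ℕ} (hk1 : 1 ≤ k) (hkn : 2*k+1 ≤ n)
    {p : P} (hp : p ∈ UU B o (2*k+1)) :
    (p -ᵥ o) - phi B (2*k+1) (p -ᵥ o) • EE B (2*k+1) - phi B (2*k) (p -ᵥ o) • EE B (2*k)
      ∈ SS B (2*k-1) := by
  have h1 : (p -ᵥ o) - phi B (2*k+1) (p -ᵥ o) • EE B (2*k+1) ∈ SS B (2*k) := by
    have := SS_step B (l := 2*k) hkn (mem_UU.1 hp)
    simpa using this
  have h2 := SS_step B (l := 2*k-1) (by omega)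
      (v := (p -ᵥ o) - phi B (2*k+1) (p -ᵥ o) • EE B (2*k+1)) (by
        have he : 2*k-1+1 = 2*k := by omega
        rw [he]; exact h1)
  have he : 2*k-1+1 = 2*k := by omega
  rw [he] at h2
  have h3 : phi B (2*k) ((p -ᵥ o) - phi B (2*k+1) (p -ᵥ o) • EE B (2*k+1))
      = phi B (2*k) (p -ᵥ o) := by
    rw [map_sub, map_smul, phi_EE_ne B (by omega)]
    simp
  rwa [h3] at h2

/-- The transversal construction: a reachable line through any point of `UU (2k+1)` whose
`2k`-th coordinate is neither 0 nor 1. -/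
lemma trans_lemma {B : Module.Basis (Fin n) K V} {o : P} {a : ℕ → AffineSubspace K P}
    {AS : List (AffineSubspace K P)}
    (hAS : AS = (List.range m).map fun i => a (i + 1))
    (hn : n = 2*m - 1) (hm2 : 2 ≤ m)
    (haj : ∀ j, 2 ≤ j → j ≤ m →
      a j = line[K, EE B (2*j-2) +ᵥ o, (EE B (2*j-2) + EE B (2*j-1)) +ᵥ o])
    {k : ℕ} (hk1 : 1 ≤ k) (hk : k + 1 ≤ m)
    (ih : ∀ p ∈ UU B o (2*k-1), ReachL AS (2^k - 2) (UU B o (2*k-1)) p)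
    {p : P} (hp : p ∈ UU B o (2*k+1))
    (hl0 : phi B (2*k) (p -ᵥ o) ≠ 0) (hl1 : phi B (2*k) (p -ᵥ o) ≠ 1) :
    ∃ c u bb, AChain AS c ∧ c.length ≤ 2^k - 1 ∧ line[K, u, bb] ∈ AS ++ c ∧
      p ∈ line[K, u, bb] ∧ u ∈ UU B o (2*k-1) ∧ bb ∈ a (k+1) ∧
      phi B (2*k) (u -ᵥ o) = 0 ∧ phi B (2*k) (bb -ᵥ o) = 1 ∧ u ≠ bb ∧
      line[K, u, bb] ≤ UU B o (2*k+1) := by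
  have hkn : 2*k+1 ≤ n := by omega
  have h2k1 : 1 ≤ 2*k := by omega
  have h2kn : 2*k ≤ n := by omega
  obtain ⟨lam, hlam⟩ : ∃ x, phi B (2*k) (p -ᵥ o) = x := ⟨_, rfl⟩
  obtain ⟨mu, hmu⟩ : ∃ x, phi B (2*k+1) (p -ᵥ o) = x := ⟨_, rfl⟩
  rw [hlam] at hl0 hl1
  obtain ⟨w, hw⟩ : ∃ w, (p -ᵥ o) - mu • EE B (2*k+1) - lam • EE B (2*k) = w := ⟨_, rfl⟩
  have hwS : w ∈ SS B (2*k-1) := by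
    have := decompose hk1 hkn hp
    rwa [hlam, hmu, hw] at this
  obtain ⟨u, hu⟩ : ∃ u : P, ((1-lam)⁻¹ • w) +ᵥ o = u := ⟨_, rfl⟩
  obtain ⟨bb, hbb⟩ : ∃ bb : P, (EE B (2*k) + (lam⁻¹ * mu) • EE B (2*k+1)) +ᵥ o = bb := ⟨_, rfl⟩
  have huo : u -ᵥ o = (1-lam)⁻¹ • w := by rw [← hu]; exact vadd_vsub _ _
  have hbo : bb -ᵥ o = EE B (2*k) + (lam⁻¹ * mu) • EE B (2*k+1) := by
    rw [← hbb]; exact vadd_vsub _ _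
  -- phi values
  have hphiu : phi B (2*k) (u -ᵥ o) = 0 := by
    rw [huo, map_smul, phi_zero_of_mem_SS B (by simp only [Set.mem_Icc, not_and, not_le]; omega) hwS, smul_zero]
  have hphib : phi B (2*k) (bb -ᵥ o) = 1 := by
    rw [hbo, map_add, map_smul, phi_EE_same B h2k1 h2kn, phi_EE_ne B (by omega)]
    simp
  have hub : u ≠ bb := by
    intro he
    rw [he, hphib] at hphiu
    exact one_ne_zero hphiu
  -- u, bb in the right places
  have huU : u ∈ UU B o (2*k-1) := by
    rw [mem_UU, huo]; exact Submodule.smul_mem _ _ hwS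
  have hbbS : bb -ᵥ o ∈ SS B (2*k+1) := by
    rw [hbo]
    exact Submodule.add_mem _ (EE_mem_SS B h2k1 (by omega))
      (Submodule.smul_mem _ _ (EE_mem_SS B (by omega) le_rfl))
  have h22 : 2*(k+1)-2 = 2*k := by omega
  have h21 : 2*(k+1)-1 = 2*k+1 := by omega
  have hba : bb ∈ a (k+1) := by
    rw [mem_aj_iff haj (by omega) hk, h22, h21]
    exact ⟨lam⁻¹ * mu, hbb.symm⟩
  have huU' : u ∈ UU B o (2*k+1) := UU_mono (by omega) huU
  have hbU' : bb ∈ UU B o (2*k+1) := mem_UU.2 hbbS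
  have hlineU : line[K, u, bb] ≤ UU B o (2*k+1) :=
    affineSpan_pair_le_of_mem_of_mem huU' hbU'
  -- p lies on the line
  have h1l : (1:K) - lam ≠ 0 := sub_ne_zero.2 (fun h => hl1 h.symm)
  have hpline : p ∈ line[K, u, bb] := by
    rw [mem_line_iff]
    refine ⟨lam, ?_⟩
    have hbu : bb -ᵥ u = (EE B (2*k) + (lam⁻¹ * mu) • EE B (2*k+1)) - (1-lam)⁻¹ • w := by
      rw [← hbo, ← huo, vsub_sub_vsub_cancel_right]
    have hc : lam * (lam⁻¹ * mu) = mu := by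
      rw [← mul_assoc, mul_inv_cancel₀ hl0, one_mul]
    have hd : (1-lam)⁻¹ - lam * (1-lam)⁻¹ = 1 := by
      have : (1-lam)⁻¹ - lam * (1-lam)⁻¹ = (1-lam) * (1-lam)⁻¹ := by
        rw [sub_mul, one_mul]
      rw [this, mul_inv_cancel₀ h1l]
    have hww : (1-lam)⁻¹ • w - (lam * (1-lam)⁻¹) • w = w := by
      rw [← sub_smul, hd, one_smul]
    have veq : (lam • (bb -ᵥ u) +ᵥ u) -ᵥ o = p -ᵥ o := by
      rw [vadd_vsub_assoc, hbu, huo, smul_sub, smul_add, smul_smul, smul_smul, hc]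
      have hv : p -ᵥ o = w + mu • EE B (2*k+1) + lam • EE B (2*k) := by
        rw [← hw]; abel
      rw [hv]
      conv_rhs => rw [← hww]
      abel
    rw [← vsub_vadd (lam • (bb -ᵥ u) +ᵥ u) o, veq, vsub_vadd]
  -- assemble the chain
  obtain ⟨cy, y, hych, hylen, hymem, hyline, huy, hyU⟩ := ih u huU
  have hxline : ALine K (line[K, u, bb]) := line_aline hub
  have hbb_notin_y : bb ∉ y := fun hin => by
    have : phi B (2*k) (bb -ᵥ o) = 0 :=
      phi_zero_of_mem_SS B (by simp only [Set.mem_Icc, not_and, not_le]; omega) (mem_UU.1 (hyU hin))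
    rw [hphib] at this; exact one_ne_zero this
  have hphi_aj : ∀ q ∈ a (k+1), phi B (2*k) (q -ᵥ o) = 1 := by
    intro q hq
    obtain ⟨t, hqe⟩ := (mem_aj_iff haj (by omega) hk).1 hq
    rw [h22, h21] at hqe
    subst hqe
    rw [vadd_vsub, map_add, map_smul, phi_EE_same B h2k1 h2kn, phi_EE_ne B (by omega)]
    simp
  have hu_notin_a : u ∉ a (k+1) := fun hin => by
    have := hphi_aj u hin
    rw [hphiu] at this; exact one_ne_zero this.symm
  have hxy : line[K, u, bb] ≠ y := fun he => hbb_notin_y (he ▸ right_mem_affineSpan_pair K u bb)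
  have hxa : line[K, u, bb] ≠ a (k+1) :=
    fun he => hu_notin_a (he ▸ left_mem_affineSpan_pair K u bb)
  have hmeets : AMeetsTwo (line[K, u, bb]) y (a (k+1)) :=
    ameets_two_of hxy hxa (left_mem_affineSpan_pair K u bb) huy
      (right_mem_affineSpan_pair K u bb) hba hu_notin_a
  have hamem : a (k+1) ∈ AS := a_mem_AS hAS (by omega) hk
  have hchain : AChain AS (cy ++ [line[K, u, bb]]) := by
    refine hych.append ⟨⟨hxline, Or.inr ⟨y, ?_, a (k+1), ?_, hmeets⟩⟩, trivial⟩
    · exact hymem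
    · exact List.mem_append_left _ hamem
  refine ⟨cy ++ [line[K, u, bb]], u, bb, hchain, ?_, ?_, hpline, huU, hba, hphiu, hphib,
    hub, hlineU⟩
  · have h2 : 2 ≤ 2^k := by
      calc 2 = 2^1 := (pow_one 2).symm
      _ ≤ 2^k := Nat.pow_le_pow_right (by norm_num) hk1
    simp only [List.length_append, List.length_singleton]
    omega
  · rw [← List.append_assoc]
    exact List.mem_append_right _ (List.mem_singleton_self _)
end Core

section Core2
variable {K V P : Type*} [DivisionRing K] [AddCommGroup V] [Module K V] [AddTorsor V P]
  {n m : ℕ}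

lemma reachL_mono {AS : List (AffineSubspace K P)} {cb cb' : ℕ} {S S' : AffineSubspace K P}
    {p : P} (h : ReachL AS cb S p) (hcb : cb ≤ cb') (hS : S ≤ S') : ReachL AS cb' S' p := by
  obtain ⟨c, x, h1, h2, h3, h4, h5, h6⟩ := h
  exact ⟨c, x, h1, h2.trans hcb, h3, h4, h5, h6.trans hS⟩

lemma phi_aj {B : Module.Basis (Fin n) K V} {o : P} {a : ℕ → AffineSubspace K P}
    (hn : n = 2*m - 1) (hm2 : 2 ≤ m)
    (haj : ∀ j, 2 ≤ j → j ≤ m →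
      a j = line[K, EE B (2*j-2) +ᵥ o, (EE B (2*j-2) + EE B (2*j-1)) +ᵥ o])
    {k : ℕ} (hk1 : 1 ≤ k) (hk : k + 1 ≤ m) {q : P} (hq : q ∈ a (k+1)) :
    phi B (2*k) (q -ᵥ o) = 1 := by
  have h22 : 2*(k+1)-2 = 2*k := by omega
  have h21 : 2*(k+1)-1 = 2*k+1 := by omega
  obtain ⟨t, hqe⟩ := (mem_aj_iff haj (by omega) hk).1 hq
  rw [h22, h21] at hqe
  subst hqe
  rw [vadd_vsub, map_add, map_smul, phi_EE_same B (by omega) (by omega),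
    phi_EE_ne B (by omega)]
  simp

lemma aline_aj {B : Module.Basis (Fin n) K V} {o : P} {a : ℕ → AffineSubspace K P}
    (hn : n = 2*m - 1) (hm2 : 2 ≤ m)
    (haj : ∀ j, 2 ≤ j → j ≤ m →
      a j = line[K, EE B (2*j-2) +ᵥ o, (EE B (2*j-2) + EE B (2*j-1)) +ᵥ o])
    {j : ℕ} (h2 : 2 ≤ j) (hj : j ≤ m) : ALine K (a j) := by
  rw [haj j h2 hj]
  refine line_aline fun he => ?_
  have h1 : EE B (2*j-2) + EE B (2*j-1) = EE B (2*j-2) := vadd_right_cancel o he.symm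
  have h2' : EE B (2*j-1) = 0 := by
    have := h1
    rwa [add_eq_left] at this
  rw [EE_apply B (by omega) (by omega)] at h2'
  exact B.ne_zero _ h2'

lemma aj_le_UU {B : Module.Basis (Fin n) K V} {o : P} {a : ℕ → AffineSubspace K P}
    (hn : n = 2*m - 1) (hm2 : 2 ≤ m)
    (haj : ∀ j, 2 ≤ j → j ≤ m →
      a j = line[K, EE B (2*j-2) +ᵥ o, (EE B (2*j-2) + EE B (2*j-1)) +ᵥ o])
    {k : ℕ} (hk1 : 1 ≤ k) (hk : k + 1 ≤ m) : a (k+1) ≤ UU B o (2*k+1) := by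
  have h22 : 2*(k+1)-2 = 2*k := by omega
  have h21 : 2*(k+1)-1 = 2*k+1 := by omega
  rw [haj (k+1) (by omega) hk, h22, h21]
  refine affineSpan_pair_le_of_mem_of_mem ?_ ?_
  · rw [mem_UU, vadd_vsub]
    exact EE_mem_SS B (by omega) (by omega)
  · rw [mem_UU, vadd_vsub]
    exact Submodule.add_mem _ (EE_mem_SS B (by omega) (by omega))
      (EE_mem_SS B (by omega) le_rfl)

lemma reach_main {B : Module.Basis (Fin n) K V} {o : P} {a : ℕ → AffineSubspace K P}
    {AS : List (AffineSubspace K P)}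
    (hAS : AS = (List.range m).map fun i => a (i + 1))
    (hn : n = 2*m - 1) (hm2 : 2 ≤ m)
    (ha1 : a 1 = line[K, o, EE B 1 +ᵥ o]) (ha1line : ALine K (a 1))
    (haj : ∀ j, 2 ≤ j → j ≤ m →
      a j = line[K, EE B (2*j-2) +ᵥ o, (EE B (2*j-2) + EE B (2*j-1)) +ᵥ o])
    (hK3 : ∃ s : K, s ≠ 0 ∧ s ≠ 1) :
    ∀ k, 1 ≤ k → k ≤ m → ∀ p ∈ UU B o (2*k-1), ReachL AS (2^k - 2) (UU B o (2*k-1)) p := by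
  intro k hk1
  induction k, hk1 using Nat.le_induction with
  | base =>
    intro _ p hp
    refine ⟨[], a 1, AChain.nil, by simp, by simp [a_mem_AS hAS le_rfl (by omega)], ha1line,
      ?_, ?_⟩
    · have h1 : p -ᵥ o ∈ SS B 1 := mem_UU.1 (by simpa using hp)
      rw [SS, Set.Icc_self, Set.image_singleton] at h1
      obtain ⟨r, hr⟩ := Submodule.mem_span_singleton.1 h1
      rw [ha1, mem_line_iff]
      exact ⟨r, by rw [vadd_vsub, hr, vsub_vadd]⟩
    · rw [ha1]
      refine affineSpan_pair_le_of_mem_of_mem ?_ ?_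
      · exact (AffineSubspace.self_mem_mk' o (SS B 1) : o ∈ UU B o 1)
      · rw [mem_UU, vadd_vsub]
        exact EE_mem_SS B le_rfl (by omega)
  | succ k hk1 ihk =>
    intro hkm1 p hp
    have hkm : k ≤ m := by omega
    have ih := ihk hkm
    have hidx : 2*(k+1)-1 = 2*k+1 := by omega
    rw [hidx] at hp ⊢
    have h22 : 2*(k+1)-2 = 2*k := by omega
    have hkn : 2*k+1 ≤ n := by omega
    have h2k1 : 1 ≤ 2*k := by omega
    have h2kn : 2*k ≤ n := by omega
    have hpow : 2 ≤ 2^k := by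
      calc 2 = 2^1 := (pow_one 2).symm
      _ ≤ 2^k := Nat.pow_le_pow_right (by norm_num) hk1
    have hpow' : 2^(k+1) = 2 * 2^k := by rw [pow_succ]; ring
    obtain ⟨lam, hlam⟩ : ∃ x, phi B (2*k) (p -ᵥ o) = x := ⟨_, rfl⟩
    obtain ⟨mu, hmu⟩ : ∃ x, phi B (2*k+1) (p -ᵥ o) = x := ⟨_, rfl⟩
    obtain ⟨w, hw⟩ : ∃ w, (p -ᵥ o) - mu • EE B (2*k+1) - lam • EE B (2*k) = w := ⟨_, rfl⟩
    have hwS : w ∈ SS B (2*k-1) := by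
      have := decompose hk1 hkn hp
      rwa [hlam, hmu, hw] at this
    by_cases hl0 : lam = 0
    · by_cases hmu0 : mu = 0
      · -- Case A : p ∈ UU (2k-1)
        have hpU : p ∈ UU B o (2*k-1) := by
          rw [mem_UU]
          have : p -ᵥ o = w := by rw [← hw, hl0, hmu0]; simp
          rw [this]; exact hwS
        exact reachL_mono (ih p hpU) (by omega) (UU_mono (by omega))
      · -- Case C : lam = 0, mu ≠ 0
        obtain ⟨s, hs0, hs1⟩ := hK3
        obtain ⟨bb0, hbb0⟩ : ∃ q : P, EE B (2*k) +ᵥ o = q := ⟨_, rfl⟩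
        have hbb0a : bb0 ∈ a (k+1) := by
          rw [mem_aj_iff haj (by omega) hkm1, h22]
          exact ⟨0, by rw [← hbb0]; simp⟩
        have hbb0o : bb0 -ᵥ o = EE B (2*k) := by rw [← hbb0]; exact vadd_vsub _ _
        have hpa : p ∉ a (k+1) := fun hin => by
          have := phi_aj hn hm2 haj hk1 hkm1 hin
          rw [hlam, hl0] at this
          exact one_ne_zero this.symm
        have hpbb0 : p ≠ bb0 := fun he => hpa (he ▸ hbb0a)
        obtain ⟨P₂, hP₂⟩ : ∃ q : P, s • (bb0 -ᵥ p) +ᵥ p = q := ⟨_, rfl⟩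
        have hP₂o : P₂ -ᵥ o = s • (bb0 -ᵥ p) + (p -ᵥ o) := by
          rw [← hP₂]; exact vadd_vsub_assoc _ _ _
        have hbp : bb0 -ᵥ p = (bb0 -ᵥ o) - (p -ᵥ o) := (vsub_sub_vsub_cancel_right _ _ _).symm
        have hP₂lam : phi B (2*k) (P₂ -ᵥ o) = s := by
          rw [hP₂o, map_add, map_smul, hbp, map_sub, hbb0o,
            phi_EE_same B h2k1 h2kn, hlam, hl0]
          simp
        have hP₂U : P₂ ∈ UU B o (2*k+1) := by
          rw [mem_UU, hP₂o, hbp, hbb0o]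
          exact Submodule.add_mem _ (Submodule.smul_mem _ _ (Submodule.sub_mem _
            (EE_mem_SS B (by omega) (by omega)) (mem_UU.1 hp)))
            (mem_UU.1 hp)
        obtain ⟨cx, u, bx, hxch, hxlen, hxmem, hPx, huU, hbxa, hphiu, hphib, hub, hxU⟩ :=
          trans_lemma hAS hn hm2 haj hk1 hkm1 ih hP₂U
            (by rw [hP₂lam]; exact hs0) (by rw [hP₂lam]; exact hs1)
        have hpnx : p ∉ line[K, u, bx] := by
          intro hin
          have := line_param hphiu hphib hin
          rw [hlam, hl0] at this
          simp only [zero_smul, zero_vadd] at this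
          subst this
          have : phi B (2*k+1) (p -ᵥ o) = 0 :=
            phi_zero_of_mem_SS B (by simp only [Set.mem_Icc, not_and, not_le]; omega)
              (mem_UU.1 huU)
          rw [hmu] at this
          exact hmu0 this
        have hP₂z : P₂ ∈ line[K, p, bb0] := by
          rw [mem_line_iff]; exact ⟨s, hP₂⟩
        have hP₂a : P₂ ∉ a (k+1) := fun hin => by
          have := phi_aj hn hm2 haj hk1 hkm1 hin
          rw [hP₂lam] at this
          exact hs1 this
        have hzx : line[K, p, bb0] ≠ line[K, u, bx] :=
          fun he => hpnx (he ▸ left_mem_affineSpan_pair K p bb0)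
        have hza : line[K, p, bb0] ≠ a (k+1) :=
          fun he => hpa (he ▸ left_mem_affineSpan_pair K p bb0)
        have hmeets : AMeetsTwo (line[K, p, bb0]) (line[K, u, bx]) (a (k+1)) :=
          ameets_two_of hzx hza hP₂z hPx (right_mem_affineSpan_pair K p bb0) hbb0a hP₂a
        have hamem : a (k+1) ∈ AS := a_mem_AS hAS (by omega) hkm1
        have hchain : AChain AS (cx ++ [line[K, p, bb0]]) :=
          hxch.append ⟨⟨line_aline hpbb0, Or.inr ⟨line[K, u, bx], hxmem,
            a (k+1), List.mem_append_left _ hamem, hmeets⟩⟩, trivial⟩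
        refine ⟨cx ++ [line[K, p, bb0]], line[K, p, bb0], hchain, ?_, ?_,
          line_aline hpbb0, left_mem_affineSpan_pair K p bb0, ?_⟩
        · simp only [List.length_append, List.length_singleton]; omega
        · rw [← List.append_assoc]
          exact List.mem_append_right _ (List.mem_singleton_self _)
        · refine affineSpan_pair_le_of_mem_of_mem hp ?_
          rw [mem_UU, hbb0o]
          exact EE_mem_SS B (by omega) (by omega)
    · by_cases hl1 : lam = 1
      · by_cases hw0 : w = 0
        · -- Case D : p ∈ a (k+1)
          have hpo : p -ᵥ o = EE B (2*k) + mu • EE B (2*k+1) := by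
            have h := hw
            rw [hw0, hl1, one_smul, sub_sub, sub_eq_zero] at h
            rw [h]; abel
          have hpa : p ∈ a (k+1) := by
            rw [mem_aj_iff haj (by omega) hkm1, h22, hidx]
            refine ⟨mu, ?_⟩
            rw [← hpo, vsub_vadd]
          refine ⟨[], a (k+1), AChain.nil, by simp, by simp [a_mem_AS hAS (by omega) hkm1],
            aline_aj hn hm2 haj (by omega) hkm1, hpa, aj_le_UU hn hm2 haj hk1 hkm1⟩
        · -- Case E : lam = 1, w ≠ 0
          obtain ⟨s, hs0, hs1⟩ := hK3
          have hpo' : phi B (2*k) (o -ᵥ o) = 0 := by rw [vsub_self, map_zero]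
          obtain ⟨Ps, hPs⟩ : ∃ q : P, s • (o -ᵥ p) +ᵥ p = q := ⟨_, rfl⟩
          have hPso : Ps -ᵥ o = s • (o -ᵥ p) + (p -ᵥ o) := by
            rw [← hPs]; exact vadd_vsub_assoc _ _ _
          have hop : o -ᵥ p = -(p -ᵥ o) := (neg_vsub_eq_vsub_rev _ _).symm
          have hPslam : phi B (2*k) (Ps -ᵥ o) = 1 - s := by
            rw [hPso, map_add, map_smul, hop, map_neg, hlam, hl1]
            simp [sub_eq_add_neg, add_comm]
          have hPsU : Ps ∈ UU B o (2*k+1) := by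
            rw [mem_UU, hPso, hop]
            exact Submodule.add_mem _ (Submodule.smul_mem _ _ (Submodule.neg_mem _
              (mem_UU.1 hp))) (mem_UU.1 hp)
          obtain ⟨cx, ux, bx, hxch, hxlen, hxmem, hPx, huxU, hbxa, hphiux, hphibx, huxbx,
            hxU⟩ := trans_lemma hAS hn hm2 haj hk1 hkm1 ih hPsU
              (by rw [hPslam]; intro h; exact hs1 (sub_eq_zero.1 h).symm)
              (by rw [hPslam]; intro h; exact hs0 (by rwa [sub_eq_self] at h))
          have hpa : p ∉ a (k+1) := by
            intro hin
            obtain ⟨t, hqe⟩ := (mem_aj_iff haj (by omega) hkm1).1 hin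
            rw [h22, hidx] at hqe
            have hpo2 : p -ᵥ o = EE B (2*k) + t • EE B (2*k+1) := by rw [hqe, vadd_vsub]
            have hwE : w = (t - mu) • EE B (2*k+1) := by
              rw [← hw, hpo2, hl1, one_smul, sub_smul]; abel
            have hphiw : phi B (2*k+1) w = 0 :=
              phi_zero_of_mem_SS B (by simp only [Set.mem_Icc, not_and, not_le]; omega) hwS
            rw [hwE, map_smul, phi_EE_same B (by omega) (by omega), smul_eq_mul,
              mul_one] at hphiw
            apply hw0
            rw [hwE, sub_eq_zero.1 hphiw]
            simp
          have hpnx : p ∉ line[K, ux, bx] := by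
            intro hin
            have hpar := line_param hphiux hphibx hin
            rw [hlam, hl1, one_smul, vsub_vadd] at hpar
            exact hpa (hpar ▸ hbxa)
          obtain ⟨cy, y, hych, hylen, hymem, hyline, hoy, hyU⟩ :=
            ih o (by rw [mem_UU, vsub_self]; exact Submodule.zero_mem _)
          have hpno : p ≠ o := fun he => by
            have h0 : (0:K) = lam := by rw [← hlam, he, vsub_self, map_zero]
            rw [hl1] at h0
            exact one_ne_zero h0.symm
          have hPsz : Ps ∈ line[K, p, o] := mem_line_iff.2 ⟨s, hPs⟩
          have hpny : p ∉ y := fun hin => by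
            have h0 : phi B (2*k) (p -ᵥ o) = 0 :=
              phi_zero_of_mem_SS B (by simp only [Set.mem_Icc, not_and, not_le]; omega)
                (mem_UU.1 (hyU hin))
            rw [hlam, hl1] at h0
            exact one_ne_zero h0
          have hPsny : Ps ∉ y := fun hin => by
            have h0 : phi B (2*k) (Ps -ᵥ o) = 0 :=
              phi_zero_of_mem_SS B (by simp only [Set.mem_Icc, not_and, not_le]; omega)
                (mem_UU.1 (hyU hin))
            rw [hPslam] at h0
            exact hs1 (sub_eq_zero.1 h0).symm
          have hzx : line[K, p, o] ≠ line[K, ux, bx] :=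
            fun he => hpnx (he ▸ left_mem_affineSpan_pair K p o)
          have hzy : line[K, p, o] ≠ y :=
            fun he => hpny (he ▸ left_mem_affineSpan_pair K p o)
          have hmeets : AMeetsTwo (line[K, p, o]) (line[K, ux, bx]) y :=
            ameets_two_of hzx hzy hPsz hPx (right_mem_affineSpan_pair K p o) hoy hPsny
          have hchain : AChain AS (cy ++ (cx ++ [line[K, p, o]])) := by
            refine hych.append ?_
            refine (hxch.mono (List.subset_append_left _ _)).append ?_
            refine ⟨⟨line_aline hpno, Or.inr ⟨line[K, ux, bx], ?_, y, ?_, hmeets⟩⟩, trivial⟩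
            · rcases List.mem_append.1 hxmem with h | h
              · exact List.mem_append_left _ (List.mem_append_left _ h)
              · exact List.mem_append_right _ h
            · exact List.mem_append_left _ hymem
          refine ⟨cy ++ (cx ++ [line[K, p, o]]), line[K, p, o], hchain, ?_, ?_,
            line_aline hpno, left_mem_affineSpan_pair K p o, ?_⟩
          · simp only [List.length_append, List.length_singleton]; omega
          · refine List.mem_append_right _ ?_
            refine List.mem_append_right _ ?_
            exact List.mem_append_right _ (List.mem_singleton_self _)
          · refine affineSpan_pair_le_of_mem_of_mem hp ?_
            rw [mem_UU, vsub_self]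
            exact Submodule.zero_mem _
      · -- Case B : lam ∉ {0,1}
        obtain ⟨cx, u, bx, hxch, hxlen, hxmem, hPx, huU, hbxa, hphiu, hphib, hub, hxU⟩ :=
          trans_lemma hAS hn hm2 haj hk1 hkm1 ih hp (by rw [hlam]; exact hl0)
            (by rw [hlam]; exact hl1)
        exact ⟨cx, line[K, u, bx], hxch, by omega, hxmem, line_aline hub, hPx, hxU⟩
end Core2

section Setup
variable {K V P : Type*} [DivisionRing K] [AddCommGroup V] [Module K V] [AddTorsor V P]

lemma aline_gen {x : AffineSubspace K P} (hx : ALine K x) :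
    ∃ v : V, v ≠ 0 ∧ x.direction = Submodule.span K {v} := by
  haveI : FiniteDimensional K x.direction := Module.finite_of_finrank_eq_succ hx.2
  haveI : Nontrivial x.direction :=
    Module.nontrivial_of_finrank_pos (R := K) (by rw [hx.2]; omega)
  obtain ⟨⟨v, hv⟩, hne⟩ := exists_ne (0 : x.direction)
  have hv0 : v ≠ 0 := fun h => hne (Subtype.ext (by simp [h]))
  refine ⟨v, hv0, ?_⟩
  have hle : Submodule.span K {v} ≤ x.direction :=
    (Submodule.span_singleton_le_iff_mem v _).2 hv
  exact (Submodule.eq_of_le_of_finrank_le hle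
    (by rw [hx.2, finrank_span_singleton hv0])).symm

lemma vadd_mem_of_mem_dir {x : AffineSubspace K P} {p : P} (hp : p ∈ x) {v : V}
    (hv : v ∈ x.direction) : v +ᵥ p ∈ x :=
  (AffineSubspace.vadd_mem_iff_mem_direction v hp).2 hv

lemma vadd_ne_self {p : P} {v : V} (hv : v ≠ 0) : p ≠ v +ᵥ p := fun h => by
  have : v +ᵥ p = (0 : V) +ᵥ p := by rw [zero_vadd, ← h]
  exact hv (vadd_right_cancel p this)

end Setup

theorem statement18 {K V P : Type*} [DivisionRing K] [AddCommGroup V] [Module K V]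
    [AddTorsor V P] {n m r : ℕ} (hn : 3 ≤ n) (hodd : Odd n)
    (hK : (3 : Cardinal) ≤ Cardinal.mk K)
    (hdim : Module.finrank K V = n) (hm : m = (n + 1) / 2) (hr : r = 2 ^ (m + 1) - 4)
    (a₁ a₂ : AffineSubspace K P) (ha₁ : ALine K a₁) (ha₂ : ALine K a₂)
    (hindep : Module.finrank K
      (affineSpan K ((a₁ : Set P) ∪ (a₂ : Set P))).direction = 3) :
    ∃ a : ℕ → AffineSubspace K P, a 1 = a₁ ∧ a 2 = a₂ ∧
      (∀ i ∈ Finset.Icc 1 m, ALine K (a i)) ∧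
      Module.finrank K
        (affineSpan K (⋃ i ∈ Finset.Icc 1 m, (a i : Set P))).direction = 2 * m - 1 ∧
      ∀ g : AffineSubspace K P, ALine K g →
        MqPred r ((List.range m).map fun i => a (i + 1)) g := by
  classical
  have hm2 : 2 ≤ m := by omega
  have hn2 : n = 2 * m - 1 := by
    obtain ⟨t, ht⟩ := hodd; omega
  -- at least 3 scalars
  have hK3 : ∃ s : K, s ≠ 0 ∧ s ≠ 1 := by
    by_contra hc
    push_neg at hc
    have huniv : (Set.univ : Set K) ⊆ {0, 1} := by
      intro s _
      by_cases h0 : s = 0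
      · simp [h0]
      · simp [hc s h0]
    have h1 : Cardinal.mk ({0, 1} : Set K) ≤ 2 := by
      have h2 := Cardinal.mk_insert_le (α := K) (a := (0:K)) (s := ({1} : Set K))
      rw [Cardinal.mk_singleton] at h2
      calc Cardinal.mk ({0, 1} : Set K) ≤ 1 + 1 := h2
      _ = 2 := by norm_num
    have hle : Cardinal.mk K ≤ 2 := by
      rw [← Cardinal.mk_univ]
      exact (Cardinal.mk_le_mk_of_subset huniv).trans h1
    have h32 : (3 : Cardinal) ≤ 2 := le_trans hK hle
    norm_num at h32
  -- choose points and directions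
  obtain ⟨o, ho⟩ := ha₁.1
  obtain ⟨e₁, he₁0, he₁⟩ := aline_gen ha₁
  obtain ⟨o', ho'⟩ := ha₂.1
  obtain ⟨e₃, he₃0, he₃⟩ := aline_gen ha₂
  have he₁d : e₁ ∈ a₁.direction := he₁ ▸ Submodule.mem_span_singleton_self e₁
  have he₃d : e₃ ∈ a₂.direction := he₃ ▸ Submodule.mem_span_singleton_self e₃
  obtain ⟨e₂, he₂⟩ : ∃ v : V, o' -ᵥ o = v := ⟨_, rfl⟩
  have ho'e : e₂ +ᵥ o = o' := by rw [← he₂, vsub_vadd]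
  have ha1eq : a₁ = line[K, o, e₁ +ᵥ o] :=
    aline_eq_line ha₁ ho (vadd_mem_of_mem_dir ho he₁d) (vadd_ne_self he₁0)
  have hmem23 : (e₂ + e₃) +ᵥ o = e₃ +ᵥ o' := by rw [add_comm, ← vadd_vadd, ho'e]
  have ha2eq : a₂ = line[K, e₂ +ᵥ o, (e₂ + e₃) +ᵥ o] := by
    rw [ho'e, hmem23]
    exact aline_eq_line ha₂ ho' (vadd_mem_of_mem_dir ho' he₃d) (vadd_ne_self he₃0)
  -- linear independence of e₁ e₂ e₃
  haveI hfd : FiniteDimensional K V := Module.finite_of_finrank_pos (by omega)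
  have hsupeq : affineSpan K ((a₁ : Set P) ∪ (a₂ : Set P)) = a₁ ⊔ a₂ := by
    rw [AffineSubspace.span_union, a₁.affineSpan_coe, a₂.affineSpan_coe]
  have hdirsup : (a₁ ⊔ a₂).direction
      = Submodule.span K {e₁} ⊔ Submodule.span K {e₃} ⊔ Submodule.span K {e₂} := by
    rw [AffineSubspace.direction_sup ho ho', he₁, he₃, he₂]
  have hrange : Set.range ![e₁, e₂, e₃] = {e₁, e₂, e₃} := by
    ext v
    constructor
    · rintro ⟨i, rfl⟩
      fin_cases i <;> simp
    · rintro (rfl | rfl | rfl)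
      exacts [⟨0, rfl⟩, ⟨1, rfl⟩, ⟨2, rfl⟩]
  have hspan3 : Submodule.span K (Set.range ![e₁, e₂, e₃]) = (a₁ ⊔ a₂).direction := by
    rw [hrange, hdirsup]
    rw [Submodule.span_insert, Submodule.span_insert,
      sup_comm (Submodule.span K {e₂}) (Submodule.span K {e₃}), ← sup_assoc]
  have hindep' : Module.finrank K (Submodule.span K (Set.range ![e₁, e₂, e₃])) = 3 := by
    rw [hspan3, ← hsupeq]
    exact hindep
  have hli3 : LinearIndependent K ![e₁, e₂, e₃] := by
    rw [linearIndependent_iff_card_eq_finrank_span]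
    simp only [Fintype.card_fin]
    rw [Set.finrank]
    exact hindep'.symm
  -- complement and global basis
  obtain ⟨W, hW⟩ := Submodule.exists_isCompl (Submodule.span K (Set.range ![e₁, e₂, e₃]))
  have hrkadd := Submodule.finrank_add_eq_of_isCompl hW
  rw [hindep', hdim] at hrkadd
  have hrkW : Module.finrank K W = n - 3 := by omega
  let bW : Module.Basis (Fin (n-3)) K W := (Module.finBasis K W).reindex (finCongr hrkW)
  have hliW : LinearIndependent K (fun j => ((bW j : V))) := by
    have h1 := bW.linearIndependent
    have h2 := h1.map' W.subtype (Submodule.ker_subtype W)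
    exact h2
  have hspanW : Submodule.span K (Set.range fun j => ((bW j : V))) = W := by
    have h1 : (Set.range fun j => ((bW j : V))) = W.subtype '' Set.range bW := by
      rw [← Set.range_comp]; rfl
    rw [h1, Submodule.span_image, bW.span_eq, Submodule.map_subtype_top]
  have hfamli : LinearIndependent K (Sum.elim ![e₁, e₂, e₃] (fun j => ((bW j : V)))) := by
    refine hli3.sum_type hliW ?_
    rw [hspanW]
    exact hW.disjoint
  have hfamspan : Submodule.span K (Set.range (Sum.elim ![e₁, e₂, e₃]
      (fun j => ((bW j : V))))) = ⊤ := by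
    rw [Set.Sum.elim_range, Submodule.span_union, hspanW]
    exact hW.codisjoint.eq_top
  let B0 : Module.Basis (Fin 3 ⊕ Fin (n-3)) K V := Module.Basis.mk hfamli hfamspan.ge
  let eqv : (Fin 3 ⊕ Fin (n-3)) ≃ Fin n := finSumFinEquiv.trans (finCongr (by omega))
  let B : Module.Basis (Fin n) K V := B0.reindex eqv
  have hBinl : ∀ (i : Fin 3) (hi : (i : ℕ) < n), B ⟨i, hi⟩ = ![e₁, e₂, e₃] i := by
    intro i hi
    have he : eqv.symm ⟨i, hi⟩ = Sum.inl i := by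
      rw [Equiv.symm_apply_eq]
      apply Fin.ext
      simp [eqv, finSumFinEquiv_apply_left]
    rw [Module.Basis.reindex_apply, he, Module.Basis.mk_apply]
    rfl
  have hEE1 : EE B 1 = e₁ := by
    rw [EE_apply B le_rfl (by omega)]
    exact hBinl 0 (by omega)
  have hEE2 : EE B 2 = e₂ := by
    rw [EE_apply B (by omega) (by omega)]
    exact hBinl 1 (by omega)
  have hEE3 : EE B 3 = e₃ := by
    rw [EE_apply B (by omega) (by omega)]
    exact hBinl 2 (by omega)
  -- the lines
  set a : ℕ → AffineSubspace K P := fun j =>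
    if j = 1 then a₁ else if j = 2 then a₂ else
      line[K, EE B (2*j-2) +ᵥ o, (EE B (2*j-2) + EE B (2*j-1)) +ᵥ o] with ha_def
  have ha1 : a 1 = a₁ := by simp [ha_def]
  have ha2 : a 2 = a₂ := by simp [ha_def]
  have haj : ∀ j, 2 ≤ j → j ≤ m →
      a j = line[K, EE B (2*j-2) +ᵥ o, (EE B (2*j-2) + EE B (2*j-1)) +ᵥ o] := by
    intro j h2 hj
    rcases eq_or_lt_of_le h2 with rfl | h3
    · have h22 : 2*2-2 = 2 := by norm_num
      have h21 : 2*2-1 = 3 := by norm_num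
      rw [ha2, h22, h21, hEE2, hEE3]
      exact ha2eq
    · simp only [ha_def]
      rw [if_neg (by omega), if_neg (by omega)]
  have ha1line : a 1 = line[K, o, EE B 1 +ᵥ o] := by
    rw [ha1, hEE1]; exact ha1eq
  have ha1aline : ALine K (a 1) := ha1 ▸ ha₁
  -- the list of lines
  obtain ⟨AS, hAS⟩ : ∃ l : List (AffineSubspace K P),
      (List.range m).map (fun i => a (i + 1)) = l := ⟨_, rfl⟩
  refine ⟨a, ha1, ha2, ?_, ?_, ?_⟩
  · -- all are lines
    intro i hi
    rw [Finset.mem_Icc] at hi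
    rcases Nat.lt_or_ge i 2 with h | h
    · have : i = 1 := by omega
      rw [this, ha1]; exact ha₁
    · rcases Nat.lt_or_ge i 3 with h' | h'
      · have : i = 2 := by omega
        rw [this, ha2]; exact ha₂
      · exact aline_aj (m := m) hn2 hm2 haj (by omega) hi.2
  · -- the span has full dimension
    have hdirtop : (affineSpan K (⋃ i ∈ Finset.Icc 1 m, ((a i : Set P)))).direction = ⊤ := by
      refine top_unique ?_
      have hsp : Submodule.span K (Set.range ⇑B) ≤
          (affineSpan K (⋃ i ∈ Finset.Icc 1 m, ((a i : Set P)))).direction := by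
        rw [Submodule.span_le]
        rintro _ ⟨i, rfl⟩
        have hmemA : ∀ t, 1 ≤ t → t ≤ m → ∀ q ∈ a t,
            q ∈ affineSpan K (⋃ i ∈ Finset.Icc 1 m, ((a i : Set P))) := by
          intro t h1 h2 q hq
          refine subset_affineSpan K _ ?_
          exact Set.mem_biUnion (Finset.mem_Icc.2 ⟨h1, h2⟩) hq
        obtain ⟨j, hj1, hjn, hBj⟩ : ∃ j, 1 ≤ j ∧ j ≤ n ∧ B i = EE B j := by
          refine ⟨i.1 + 1, by omega, by omega, ?_⟩
          rw [EE_apply B (by omega) (by omega)]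
          exact congrArg B (Fin.ext (by simp))
        rw [hBj]
        rcases Nat.lt_or_ge j 2 with hj | hj
        · -- j = 1
          have hj1' : j = 1 := by omega
          subst hj1'
          have h1 : o ∈ a 1 := by rw [ha1line]; exact left_mem_affineSpan_pair K _ _
          have h2 : EE B 1 +ᵥ o ∈ a 1 := by
            rw [ha1line]; exact right_mem_affineSpan_pair K _ _
          have := AffineSubspace.vsub_mem_direction
            (hmemA 1 le_rfl (by omega) _ h2) (hmemA 1 le_rfl (by omega) _ h1)
          rwa [vadd_vsub] at this
        · rcases Nat.even_or_odd j with he | he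
          · -- j even : j = 2t-2
            obtain ⟨t, h3t, htm, hjt⟩ : ∃ t, 2 ≤ t ∧ t ≤ m ∧ j = 2*t-2 := by
              obtain ⟨u, hu⟩ := he
              exact ⟨u + 1, by omega, by omega, by omega⟩
            have h1 : EE B (2*t-2) +ᵥ o ∈ a t := by
              rw [haj t h3t htm]; exact left_mem_affineSpan_pair K _ _
            have h2 : o ∈ a 1 := by rw [ha1line]; exact left_mem_affineSpan_pair K _ _
            have := AffineSubspace.vsub_mem_direction
              (hmemA t (by omega) htm _ h1) (hmemA 1 le_rfl (by omega) _ h2)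
            rw [vadd_vsub] at this
            rwa [hjt]
          · -- j odd : j = 2t-1
            obtain ⟨t, h3t, htm, hjt⟩ : ∃ t, 2 ≤ t ∧ t ≤ m ∧ j = 2*t-1 := by
              obtain ⟨u, hu⟩ := he
              exact ⟨u + 1, by omega, by omega, by omega⟩
            have h1 : EE B (2*t-2) +ᵥ o ∈ a t := by
              rw [haj t h3t htm]; exact left_mem_affineSpan_pair K _ _
            have h2 : (EE B (2*t-2) + EE B (2*t-1)) +ᵥ o ∈ a t := by
              rw [haj t h3t htm]; exact right_mem_affineSpan_pair K _ _
            have := AffineSubspace.vsub_mem_direction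
              (hmemA t (by omega) htm _ h2) (hmemA t (by omega) htm _ h1)
            rw [vadd_vsub_vadd_cancel_right] at this
            have heq : EE B (2*t-2) + EE B (2*t-1) - EE B (2*t-2) = EE B (2*t-1) := by abel
            rw [heq] at this
            rwa [hjt]
      rw [B.span_eq] at hsp
      exact hsp
    rw [hdirtop, finrank_top, hdim]
    omega
  · -- every line satisfies M_r
    intro g hg
    rw [hAS]
    have hreach := reach_main hAS.symm hn2 hm2 ha1line ha1aline haj hK3 m (by omega) le_rfl
    have hSStop : SS B (2*m-1) = ⊤ := by
      have : 2*m-1 = n := by omega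
      rw [this]
      exact SS_top B (by omega)
    have hmemU : ∀ p : P, p ∈ UU B o (2*m-1) := by
      intro p
      rw [mem_UU, hSStop]
      exact Submodule.mem_top
    obtain ⟨p, hpg⟩ := hg.1
    obtain ⟨v, hv0, hvdir⟩ := aline_gen hg
    have hqg : v +ᵥ p ∈ g := vadd_mem_of_mem_dir hpg (hvdir ▸ Submodule.mem_span_singleton_self v)
    have hpq : p ≠ v +ᵥ p := vadd_ne_self hv0
    obtain ⟨cp, x, hc1, hlen1, hx1, hxline, hpx, _⟩ := hreach p (hmemU p)
    obtain ⟨cq, y, hc2, hlen2, hy2, hyline, hqy, _⟩ := hreach (v +ᵥ p) (hmemU _)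
    have hchain : AChain AS (cp ++ cq) :=
      hc1.append (hc2.mono (List.subset_append_left _ _))
    have hxmem : x ∈ AS ++ (cp ++ cq) := by
      rcases List.mem_append.1 hx1 with h | h
      · exact List.mem_append_left _ h
      · exact List.mem_append_right _ (List.mem_append_left _ h)
    have hymem : y ∈ AS ++ (cp ++ cq) := by
      rcases List.mem_append.1 hy2 with h | h
      · exact List.mem_append_left _ h
      · exact List.mem_append_right _ (List.mem_append_right _ h)
    have hpow : 2 ≤ 2^m := by
      calc 2 = 2^1 := (pow_one 2).symm
      _ ≤ 2^m := Nat.pow_le_pow_right (by norm_num) (by omega)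
    have hpow' : 2^(m+1) = 2 * 2^m := by rw [pow_succ]; ring
    have hlen : (cp ++ cq).length ≤ r := by
      rw [List.length_append, hr]; omega
    have ha1AS : a 1 ∈ AS := by
      rw [← hAS]
      exact a_mem_AS rfl le_rfl (by omega)
    have hfinal : MPred (AS ++ (cp ++ cq)) g := by
      by_cases hgx : g = x
      · exact Or.inl (hgx ▸ hxmem)
      · by_cases hgy : g = y
        · exact Or.inl (hgy ▸ hymem)
        · refine Or.inr ⟨x, hxmem, y, hymem, ?_⟩
          have hpny : p ∉ y := by
            intro hpy
            exact hgy (line_eq_line_of_mem hg hyline hpg hqg hpy hqy hpq)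
          exact ameets_two_of hgx hgy hpg hpx hqg hqy hpny
    exact mqPred_of_chain ha1aline ha1AS hchain hlen hfinal
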